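/- Let {D_n} be a system of Dedekind domains with limit D, and assume each D_n is a principal ideal domain. Then D is a Bézout domain (every finitely generated ideal of D is principal) of Krull dimension 1. -/

import Mathlib

set_option synthInstance.maxHeartbeats 1000000

noncomputable section

/-- A *system of Dedekind domains* inside a field `K`: a strictly increasing chain
`D 0 ⊊ D 1 ⊊ ⋯` of subrings of `K` such that each `D n` is a Dedekind domain which is
not a field, every maximal ideal of `D i` survives (generates a proper ideal) in `D j`
for `i < j`, and every maximal ideal of `D j` contracts to a maximal ideal of `D 0`. -/
structure DedekindSystem (K : Type*) [Field K] where
  D : ℕ → Subring K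
  strictMono : StrictMono D
  dedekind : ∀ n, IsDedekindDomain (D n)
  not_field : ∀ n, ¬ IsField (D n)
  survives : ∀ i j (hij : i < j) (M : Ideal (D i)), M.IsMaximal →
    Ideal.map (Subring.inclusion (strictMono.monotone hij.le)) M ≠ ⊤
  contracts : ∀ j (M : Ideal (D j)), M.IsMaximal →
    (Ideal.comap (Subring.inclusion (strictMono.monotone (Nat.zero_le j))) M).IsMaximal

/-- The limit `D = ⋃ₙ Dₙ` of a system of Dedekind domains. -/
def DedekindSystem.limit {K : Type*} [Field K] (S : DedekindSystem K) : Subring K :=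
  ⨆ n, S.D n


theorem DedekindSystem.le_limit {K : Type*} [Field K] (S : DedekindSystem K) (n : ℕ) :
    S.D n ≤ S.limit :=
  le_iSup S.D n

theorem DedekindSystem.mem_limit {K : Type*} [Field K] (S : DedekindSystem K) {x : K} :
    x ∈ S.limit ↔ ∃ n, x ∈ S.D n :=
  Subring.mem_iSup_of_directed (S.strictMono.monotone.directed_le)

/-- If each member of a system of Dedekind domains is a principal ideal
domain, then the limit `D` is a Bézout domain of Krull dimension 1. -/
theorem DedekindSystem.bezout_of_pid {K : Type*} [Field K] (S : DedekindSystem K)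
    (hpid : ∀ n, IsPrincipalIdealRing (S.D n)) :
    IsBezout S.limit ∧ ringKrullDim S.limit = 1 := by
  have hnf : ¬ IsField (S.limit : Subring K) := by
    intro hf
    obtain ⟨M, hM⟩ := Ideal.exists_maximal (S.D 0)
    have hMbot : M ≠ ⊥ := Ring.ne_bot_of_isMaximal_of_not_isField hM (S.not_field 0)
    obtain ⟨x, hxM, hx0⟩ := Submodule.exists_mem_ne_zero_of_ne_bot hMbot
    have hxlim : (x : K) ∈ S.limit := S.le_limit 0 x.2
    have hxne : (⟨(x : K), hxlim⟩ : S.limit) ≠ 0 := by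
      intro h
      exact hx0 (Subtype.ext (show ((x : K)) = 0 from congrArg Subtype.val h))
    obtain ⟨u, hu⟩ := hf.mul_inv_cancel hxne
    obtain ⟨n, hn⟩ := S.mem_limit.mp u.2
    set k := n + 1 with hk
    let x' : S.D k := Subring.inclusion (S.strictMono.monotone (Nat.zero_le k)) x
    let u' : S.D k := ⟨(u : K), S.strictMono.monotone (Nat.le_succ n) hn⟩
    have hK1 : (x : K) * (u : K) = 1 := congrArg Subtype.val hu
    have hmul : x' * u' = 1 := Subtype.ext hK1
    apply S.survives 0 k (Nat.succ_pos n) M hM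
    exact Ideal.eq_top_of_isUnit_mem _ (Ideal.mem_map_of_mem _ hxM)
      ⟨⟨x', u', hmul, by rw [mul_comm]; exact hmul⟩, rfl⟩
  constructor
  · rw [IsBezout.iff_span_pair_isPrincipal]
    intro x y
    obtain ⟨m, hm⟩ := S.mem_limit.mp x.2
    obtain ⟨n, hn⟩ := S.mem_limit.mp y.2
    set k := max m n with hkdef
    let x' : S.D k := ⟨(x : K), S.strictMono.monotone (le_max_left m n) hm⟩
    let y' : S.D k := ⟨(y : K), S.strictMono.monotone (le_max_right m n) hn⟩
    let f : S.D k →+* S.limit := Subring.inclusion (S.le_limit k)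
    have hfx : f x' = x := Subtype.ext rfl
    have hfy : f y' = y := Subtype.ext rfl
    obtain ⟨g, hg⟩ := (hpid k).principal (Ideal.span {x', y'})
    have hxmem : x ∈ Ideal.span ({f g} : Set S.limit) := by
      have h1 : x' ∈ Ideal.span {x', y'} := Ideal.subset_span (Set.mem_insert _ _)
      rw [hg] at h1
      obtain ⟨c, hc⟩ := Ideal.mem_span_singleton'.mp h1
      refine Ideal.mem_span_singleton'.mpr ⟨f c, ?_⟩
      rw [← map_mul, hc, hfx]
    have hymem : y ∈ Ideal.span ({f g} : Set S.limit) := by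
      have h1 : y' ∈ Ideal.span {x', y'} := Ideal.subset_span (by simp)
      rw [hg] at h1
      obtain ⟨c, hc⟩ := Ideal.mem_span_singleton'.mp h1
      refine Ideal.mem_span_singleton'.mpr ⟨f c, ?_⟩
      rw [← map_mul, hc, hfy]
    refine ⟨⟨f g, le_antisymm ?_ ?_⟩⟩
    · rw [Ideal.span_le, Set.insert_subset_iff, Set.singleton_subset_iff]
      exact ⟨hxmem, hymem⟩
    · show Ideal.span ({f g} : Set S.limit) ≤ _
      rw [Ideal.span_le, Set.singleton_subset_iff]
      have h1 : g ∈ Ideal.span {x', y'} := by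
        rw [hg]; exact Ideal.subset_span rfl
      obtain ⟨a, b, hab⟩ := Ideal.mem_span_pair.mp h1
      refine Ideal.mem_span_pair.mpr ⟨f a, f b, ?_⟩
      rw [← hfx, ← hfy, ← map_mul, ← map_mul, ← map_add, hab]
  · -- Krull dimension 1
    apply le_antisymm
    · -- dim ≤ 1
      rw [ringKrullDim]
      apply iSup_le
      intro p
      by_contra hcon
      push_neg at hcon
      have hlen : 2 ≤ p.length := by
        by_contra h
        push_neg at h
        interval_cases h' : p.length <;> simp_all <;> exact absurd hcon (not_lt.mpr zero_le_one)
      have h01 : p.toFun ⟨0, by omega⟩ < p.toFun ⟨1, by omega⟩ :=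
        p.strictMono (by simp [Fin.lt_def])
      have h12 : p.toFun ⟨1, by omega⟩ < p.toFun ⟨2, by omega⟩ :=
        p.strictMono (by simp [Fin.lt_def])
      set P0 := p.toFun ⟨0, by omega⟩
      set P1 := p.toFun ⟨1, by omega⟩
      set P2 := p.toFun ⟨2, by omega⟩
      rw [← PrimeSpectrum.asIdeal_lt_asIdeal] at h01 h12
      obtain ⟨a, haP1, haP0⟩ := SetLike.exists_of_lt h01
      obtain ⟨b, hbP2, hbP1⟩ := SetLike.exists_of_lt h12
      obtain ⟨m, hm⟩ := S.mem_limit.mp a.2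
      obtain ⟨n, hn⟩ := S.mem_limit.mp b.2
      set k := max m n with hkdef
      haveI := S.dedekind k
      let f : S.D k →+* S.limit := Subring.inclusion (S.le_limit k)
      let a' : S.D k := ⟨(a : K), S.strictMono.monotone (le_max_left m n) hm⟩
      let b' : S.D k := ⟨(b : K), S.strictMono.monotone (le_max_right m n) hn⟩
      have hfa : f a' = a := Subtype.ext rfl
      have hfb : f b' = b := Subtype.ext rfl
      set Q1 := P1.asIdeal.comap f with hQ1
      set Q2 := P2.asIdeal.comap f with hQ2
      have ha'Q1 : a' ∈ Q1 := by rw [hQ1, Ideal.mem_comap, hfa]; exact haP1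
      have hb'Q2 : b' ∈ Q2 := by rw [hQ2, Ideal.mem_comap, hfb]; exact hbP2
      have hb'Q1 : b' ∉ Q1 := by rw [hQ1, Ideal.mem_comap, hfb]; exact hbP1
      have ha'ne : a' ≠ 0 := by
        intro h
        apply haP0
        have : a = 0 := by rw [← hfa, h, map_zero]
        rw [this]; exact zero_mem _
      haveI : Q1.IsPrime := Ideal.IsPrime.comap f (hK := P1.2)
      haveI : Q2.IsPrime := Ideal.IsPrime.comap f (hK := P2.2)
      have hQ1max : Q1.IsMaximal :=
        Ring.DimensionLEOne.maximalOfPrime (fun h => ha'ne (by simpa [h] using ha'Q1)) ‹Q1.IsPrime›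
      have hQ12 : Q1 ≤ Q2 := fun z hz => by
        rw [hQ1, Ideal.mem_comap] at hz
        rw [hQ2, Ideal.mem_comap]
        exact le_of_lt h12 hz
      have : Q1 = Q2 := hQ1max.eq_of_le (Ideal.IsPrime.ne_top ‹Q2.IsPrime›) hQ12
      exact hb'Q1 (this ▸ hb'Q2)
    · -- dim ≥ 1
      obtain ⟨N, hN⟩ := Ideal.exists_maximal (S.limit : Subring K)
      have hNbot : N ≠ ⊥ := Ring.ne_bot_of_isMaximal_of_not_isField hN hnf
      let p0 : PrimeSpectrum S.limit := ⟨⊥, Ideal.bot_prime⟩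
      let p1 : PrimeSpectrum S.limit := ⟨N, hN.isPrime⟩
      have hlt : p0 < p1 := by
        rw [← PrimeSpectrum.asIdeal_lt_asIdeal]
        exact bot_lt_iff_ne_bot.mpr hNbot
      let c : LTSeries (PrimeSpectrum S.limit) := (RelSeries.singleton _ p0).snoc p1 hlt
      have := Order.LTSeries.length_le_krullDim c
      rw [ringKrullDim]
      have hc : c.length = 1 := rfl
      rw [hc, Nat.cast_one] at this
      exact this
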